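/- Given reference states X₀ ≺≺ X₁ (i.e., X₀ ≺ X₁ but X₁ ⊀ X₀), for λ, λ' ∈ [0,1] the relation ((1−λ)X₀, λX₁) ≺ ((1−λ')X₀, λ'X₁) holds if and only if λ ≤ λ'. -/

import Mathlib

/-- The scaled combination `((1-l)X₀, lX₁)`, with the conventions `(1X₀, 0X₁) = X₀`
and `(0X₀, 1X₁) = X₁` at the endpoints. -/
noncomputable def combo {St : Type*} (comp : St → St → St) (scale : ℝ → St → St)
    (X₀ X₁ : St) (l : ℝ) : St :=
  if l = 0 then X₀ else if l = 1 then X₁ else comp (scale (1 - l) X₀) (scale l X₁)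

/-- Lieb–Yngvason: for reference points `X₀ ≺≺ X₁` and `l, l' ∈ [0,1]`,
`((1−l)X₀, lX₁) ≺ ((1−l')X₀, l'X₁)` if and only if `l ≤ l'`. -/
theorem combo_prec_iff {St : Type*} (prec : St → St → Prop)
    (comp : St → St → St) (scale : ℝ → St → St)
    (comp_comm : ∀ X Y, comp X Y = comp Y X)
    (comp_assoc : ∀ X Y Z, comp (comp X Y) Z = comp X (comp Y Z))
    (scale_one : ∀ X, scale 1 X = X)
    (scale_scale : ∀ (a b : ℝ) (X : St), 0 < a → 0 < b →
      scale a (scale b X) = scale (a * b) X)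
    (scale_comp : ∀ (a : ℝ) (X Y : St), 0 < a →
      scale a (comp X Y) = comp (scale a X) (scale a Y))
    (A1 : ∀ X, prec X X)
    (A2 : ∀ X Y Z, prec X Y → prec Y Z → prec X Z)
    (A3 : ∀ X X' Y Y', prec X X' → prec Y Y' → prec (comp X Y) (comp X' Y'))
    (A4 : ∀ (l : ℝ) (X Y : St), 0 < l → prec X Y → prec (scale l X) (scale l Y))
    (A5 : ∀ (l : ℝ) (X : St), 0 < l → l < 1 →
      prec X (comp (scale (1 - l) X) (scale l X)) ∧
      prec (comp (scale (1 - l) X) (scale l X)) X)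
    (A6 : ∀ (X Y Z₀ Z₁ : St) (ε : ℕ → ℝ), (∀ n, 0 < ε n) →
      Filter.Tendsto ε Filter.atTop (nhds 0) →
      (∀ n, prec (comp X (scale (ε n) Z₀)) (comp Y (scale (ε n) Z₁))) →
      prec X Y)
    (X₀ X₁ : St) (href : prec X₀ X₁) (hirr : ¬ prec X₁ X₀)
    (l l' : ℝ) (hl : l ∈ Set.Icc (0:ℝ) 1) (hl' : l' ∈ Set.Icc (0:ℝ) 1) :
    prec (combo comp scale X₀ X₁ l) (combo comp scale X₀ X₁ l') ↔ l ≤ l' := by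
  obtain ⟨hl0, hl1⟩ := hl
  obtain ⟨hl'0, hl'1⟩ := hl'
  -- commuting lemma
  have swap : ∀ a b c : St, comp a (comp b c) = comp b (comp a c) := by
    intro a b c
    rw [← comp_assoc, comp_comm a b, comp_assoc]
  -- reverse scaling
  have A4' : ∀ (a : ℝ) (X Y : St), 0 < a → prec (scale a X) (scale a Y) → prec X Y := by
    intro a X Y ha h
    have h2 := A4 a⁻¹ _ _ (inv_pos.2 ha) h
    rwa [scale_scale _ _ _ (inv_pos.2 ha) ha, scale_scale _ _ _ (inv_pos.2 ha) ha,
      inv_mul_cancel₀ ha.ne', scale_one, scale_one] at h2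
  -- splitting with general coefficients
  have split : ∀ (a b : ℝ) (X : St), 0 < a → 0 < b →
      prec (scale (a + b) X) (comp (scale a X) (scale b X)) ∧
      prec (comp (scale a X) (scale b X)) (scale (a + b) X) := by
    intro a b X ha hb
    have hs : 0 < a + b := by linarith
    have h1 : 0 < b / (a + b) := by positivity
    have h2 : b / (a + b) < 1 := by rw [div_lt_one hs]; linarith
    obtain ⟨u, v⟩ := A5 (b / (a + b)) (scale (a + b) X) h1 h2
    have e1 : scale (1 - b / (a + b)) (scale (a + b) X) = scale a X := by
      rw [scale_scale _ _ _ (by linarith) hs]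
      congr 1
      field_simp; ring
    have e2 : scale (b / (a + b)) (scale (a + b) X) = scale b X := by
      rw [scale_scale _ _ _ h1 hs]
      congr 1
      field_simp
    rw [e1, e2] at u v
    exact ⟨u, v⟩
  -- cancellation law
  have cancel : ∀ X Y Z : St, prec (comp X Z) (comp Y Z) → prec X Y := by
    intro X Y Z h
    have hhalf : (0:ℝ) < 1/2 := by norm_num
    have hsplit : ∀ W : St, prec W (comp (scale (1/2) W) (scale (1/2) W)) ∧
        prec (comp (scale (1/2) W) (scale (1/2) W)) W := by
      intro W
      have h5 := A5 (1/2) W hhalf (by norm_num)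
      norm_num at h5
      exact h5
    have key : ∀ n : ℕ, prec (comp X (scale ((1/2:ℝ)^n) Z)) (comp Y (scale ((1/2:ℝ)^n) Z)) := by
      intro n
      induction n with
      | zero => simpa [pow_zero, scale_one] using h
      | succ n ih =>
        have hε : (0:ℝ) < (1/2:ℝ)^n := by positivity
        have e : ∀ W : St, scale (1/2) (comp W (scale ((1/2:ℝ)^n) Z))
            = comp (scale (1/2) W) (scale ((1/2:ℝ)^(n+1)) Z) := by
          intro W
          rw [scale_comp _ _ _ hhalf, scale_scale _ _ _ hhalf hε]
          congr 2
          ring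
        have hX := A4 (1/2) _ _ hhalf ih
        rw [e X, e Y] at hX
        have t1 := A3 _ _ _ _ (A1 (scale (1/2) X)) hX
        have t2 := A3 _ _ _ _ (A1 (scale (1/2) Y)) hX
        have s2 : prec (comp (scale (1/2) X) (comp (scale (1/2) X) (scale ((1/2:ℝ)^(n+1)) Z)))
            (comp (scale (1/2) Y) (comp (scale (1/2) Y) (scale ((1/2:ℝ)^(n+1)) Z))) := by
          refine A2 _ _ _ t1 ?_
          rw [swap (scale (1/2) X)]
          exact t2
        have s1 : prec (comp X (scale ((1/2:ℝ)^(n+1)) Z))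
            (comp (comp (scale (1/2) X) (scale (1/2) X)) (scale ((1/2:ℝ)^(n+1)) Z)) :=
          A3 _ _ _ _ (hsplit X).1 (A1 _)
        have s3 : prec (comp (comp (scale (1/2) Y) (scale (1/2) Y)) (scale ((1/2:ℝ)^(n+1)) Z))
            (comp Y (scale ((1/2:ℝ)^(n+1)) Z)) :=
          A3 _ _ _ _ (hsplit Y).2 (A1 _)
        refine A2 _ _ _ s1 (A2 _ _ _ ?_ s3)
        rw [comp_assoc, comp_assoc]
        exact s2
    exact A6 X Y Z Z (fun n => (1/2:ℝ)^n) (fun n => by positivity)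
      (tendsto_pow_atTop_nhds_zero_of_lt_one (by norm_num) (by norm_num)) key
  -- evaluation of combo
  have combo0 : combo comp scale X₀ X₁ 0 = X₀ := by simp [combo]
  have combo1 : combo comp scale X₀ X₁ 1 = X₁ := by norm_num [combo]
  have comboI : ∀ c : ℝ, c ≠ 0 → c ≠ 1 →
      combo comp scale X₀ X₁ c = comp (scale (1 - c) X₀) (scale c X₁) := by
    intro c h0 h1
    simp [combo, h0, h1]
  -- monotonicity: the easy direction
  have mono : ∀ a b : ℝ, 0 ≤ a → a ≤ 1 → 0 ≤ b → b ≤ 1 → a ≤ b →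
      prec (combo comp scale X₀ X₁ a) (combo comp scale X₀ X₁ b) := by
    intro a b ha0 ha1 hb0 hb1 hab
    rcases eq_or_lt_of_le hab with rfl | hlt
    · exact A1 _
    rcases eq_or_lt_of_le ha0 with rfl | hA
    · -- a = 0
      rw [combo0]
      rcases eq_or_lt_of_le hb1 with rfl | hB
      · rw [combo1]
        exact href
      · rw [comboI b (by linarith) (by linarith)]
        obtain ⟨u, _⟩ := A5 b X₀ hlt hB
        exact A2 _ _ _ u (A3 _ _ _ _ (A1 _) (A4 b _ _ hlt href))
    · -- 0 < a
      have hA1 : a < 1 := lt_of_lt_of_le hlt hb1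
      rw [comboI a (by linarith) (by linarith)]
      rcases eq_or_lt_of_le hb1 with rfl | hB
      · rw [combo1]
        obtain ⟨_, v⟩ := A5 a X₁ hA hA1
        exact A2 _ _ _ (A3 _ _ _ _ (A4 (1 - a) _ _ (by linarith) href) (A1 _)) v
      · rw [comboI b (by linarith) (by linarith)]
        have hB0 : 0 < b := lt_trans hA hlt
        have hδ : 0 < b - a := by linarith
        have stepA : prec (scale (1 - a) X₀) (comp (scale (1 - b) X₀) (scale (b - a) X₀)) := by
          have := (split (1 - b) (b - a) X₀ (by linarith) hδ).1
          rwa [show (1 - b) + (b - a) = 1 - a by ring] at this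
        have stepC : prec (comp (scale a X₁) (scale (b - a) X₁)) (scale b X₁) := by
          have := (split a (b - a) X₁ hA hδ).2
          rwa [show a + (b - a) = b by ring] at this
        have c1 : prec (comp (scale (1 - a) X₀) (scale a X₁))
            (comp (comp (scale (1 - b) X₀) (scale (b - a) X₁)) (scale a X₁)) :=
          A3 _ _ _ _ (A2 _ _ _ stepA
            (A3 _ _ _ _ (A1 _) (A4 (b - a) _ _ hδ href))) (A1 _)
        have c2 : prec (comp (comp (scale (1 - b) X₀) (scale (b - a) X₁)) (scale a X₁))
            (comp (scale (1 - b) X₀) (scale b X₁)) := by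
          rw [comp_assoc, comp_comm (scale (b - a) X₁)]
          exact A3 _ _ _ _ (A1 _) stepC
        exact A2 _ _ _ c1 c2
  constructor
  · intro h
    by_contra hc
    push_neg at hc
    exfalso
    apply hirr
    rcases eq_or_lt_of_le hl'0 with rfl | hq
    · -- l' = 0
      rw [combo0] at h
      rcases eq_or_lt_of_le hl1 with rfl | hp1
      · rwa [combo1] at h
      · rw [comboI l (by linarith) (by linarith)] at h
        obtain ⟨u, _⟩ := A5 l X₀ hc hp1
        have chain : prec (comp (scale (1 - l) X₀) (scale l X₁))
            (comp (scale (1 - l) X₀) (scale l X₀)) := A2 _ _ _ h u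
        rw [comp_comm (scale (1 - l) X₀) (scale l X₁),
          comp_comm (scale (1 - l) X₀) (scale l X₀)] at chain
        exact A4' l _ _ hc (cancel _ _ _ chain)
    · -- 0 < l'
      have hq1 : l' < 1 := lt_of_lt_of_le hc hl1
      rw [comboI l' (by linarith) (by linarith)] at h
      rcases eq_or_lt_of_le hl1 with rfl | hp1
      · rw [combo1] at h
        obtain ⟨_, v⟩ := A5 l' X₁ hq hq1
        have chain : prec (comp (scale (1 - l') X₁) (scale l' X₁))
            (comp (scale (1 - l') X₀) (scale l' X₁)) := A2 _ _ _ v h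
        exact A4' (1 - l') _ _ (by linarith) (cancel _ _ _ chain)
      · rw [comboI l (by linarith) (by linarith)] at h
        have hp0 : 0 < l := lt_trans hq hc
        have hδ : 0 < l - l' := by linarith
        have u1 : prec (comp (scale l' X₁) (scale (l - l') X₁)) (scale l X₁) := by
          have := (split l' (l - l') X₁ hq hδ).2
          rwa [show l' + (l - l') = l by ring] at this
        have u2 : prec (scale (1 - l') X₀) (comp (scale (1 - l) X₀) (scale (l - l') X₀)) := by
          have := (split (1 - l) (l - l') X₀ (by linarith) hδ).1
          rwa [show (1 - l) + (l - l') = 1 - l' by ring] at this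
        have big : prec (comp (scale (1 - l) X₀) (comp (scale l' X₁) (scale (l - l') X₁)))
            (comp (comp (scale (1 - l) X₀) (scale (l - l') X₀)) (scale l' X₁)) :=
          A2 _ _ _ (A3 _ _ _ _ (A1 _) u1)
            (A2 _ _ _ h (A3 _ _ _ _ u2 (A1 _)))
        have lhs_eq : comp (scale (1 - l) X₀) (comp (scale l' X₁) (scale (l - l') X₁))
            = comp (scale (l - l') X₁) (comp (scale (1 - l) X₀) (scale l' X₁)) := by
          rw [comp_comm (scale l' X₁) (scale (l - l') X₁),
            swap (scale (1 - l) X₀) (scale (l - l') X₁) (scale l' X₁)]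
        have rhs_eq : comp (comp (scale (1 - l) X₀) (scale (l - l') X₀)) (scale l' X₁)
            = comp (scale (l - l') X₀) (comp (scale (1 - l) X₀) (scale l' X₁)) := by
          rw [comp_assoc, swap (scale (1 - l) X₀) (scale (l - l') X₀) (scale l' X₁)]
        rw [lhs_eq, rhs_eq] at big
        exact A4' (l - l') _ _ hδ (cancel _ _ _ big)
  · intro h
    exact mono l l' hl0 hl1 hl'0 hl'1 h
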